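/- If a rank-at-most-k downdate P̃_{t+1} = P_{t+1} - V C† Vᵀ ⪰ 0 (C ∈ 𝕊₊^k, range(Vᵀ) ⊆ range(C)) is applied at one step of a Riccati recursion with PSD stage-cost matrices, then for every earlier time index t the resulting modified Riccati matrix satisfies P̃_t = P_t - V_t C_t† V_tᵀ ⪰ 0 for some C_t ∈ 𝕊₊^k and V_t ∈ ℝ^{n×k} with range(V_tᵀ) ⊆ range(C_t); i.e., a rank-≤k downdate propagates backwards as a rank-≤k downdate. -/

import Mathlib

set_option linter.unusedSectionVars false
set_option maxHeartbeats 1000000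

open Matrix

/-- The four Moore–Penrose conditions: `Dp` is the Moore–Penrose pseudoinverse of `D`. -/
def IsMP {α : Type*} [Fintype α] [DecidableEq α] (D Dp : Matrix α α ℝ) : Prop :=
  D * Dp * D = D ∧ Dp * D * Dp = Dp ∧ (D * Dp)ᵀ = D * Dp ∧ (Dp * D)ᵀ = Dp * D

namespace RiccatiAux
open Matrix

variable {α β β₁ β₂ : Type*} [Fintype α] [Fintype β] [Fintype β₁] [Fintype β₂]
  [DecidableEq β] [DecidableEq β₁] [DecidableEq β₂]

lemma gram_zero {M : Matrix α β ℝ} (h : Mᵀ * M = 0) : M = 0 := by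
  have := Matrix.conjTranspose_mul_self_eq_zero (A := M)
  rw [Matrix.conjTranspose_eq_transpose_of_trivial] at this
  exact this.mp h

lemma mp_unique {D P Q : Matrix β β ℝ} (hP : IsMP D P) (hQ : IsMP D Q) : P = Q := by
  obtain ⟨hP1, hP2, hP3, hP4⟩ := hP
  obtain ⟨hQ1, hQ2, hQ3, hQ4⟩ := hQ
  have e1 : P = P * D * Q := by
    have hDt : Dᵀ = Dᵀ * Qᵀ * Dᵀ := by
      calc Dᵀ = (D * Q * D)ᵀ := by rw [hQ1]
      _ = Dᵀ * (D * Q)ᵀ := by rw [Matrix.transpose_mul]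
      _ = Dᵀ * (Qᵀ * Dᵀ) := by rw [Matrix.transpose_mul]
      _ = Dᵀ * Qᵀ * Dᵀ := by rw [Matrix.mul_assoc]
    calc P = P * D * P := hP2.symm
    _ = P * (D * P) := by rw [Matrix.mul_assoc]
    _ = P * (Pᵀ * Dᵀ) := by rw [show Pᵀ * Dᵀ = D * P by rw [← Matrix.transpose_mul, hP3]]
    _ = P * Pᵀ * Dᵀ := by rw [Matrix.mul_assoc]
    _ = P * Pᵀ * (Dᵀ * Qᵀ * Dᵀ) := by rw [← hDt]
    _ = P * (Pᵀ * Dᵀ) * (Qᵀ * Dᵀ) := by simp only [Matrix.mul_assoc]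
    _ = P * (D * P) * (Qᵀ * Dᵀ) := by rw [show Pᵀ * Dᵀ = D * P by rw [← Matrix.transpose_mul, hP3]]
    _ = (P * D * P) * (Qᵀ * Dᵀ) := by simp only [Matrix.mul_assoc]
    _ = P * (Qᵀ * Dᵀ) := by rw [hP2]
    _ = P * (D * Q)ᵀ := by rw [Matrix.transpose_mul]
    _ = P * (D * Q) := by rw [hQ3]
    _ = P * D * Q := by rw [Matrix.mul_assoc]
  have e2 : Q = P * D * Q := by
    have hDt : Dᵀ = Dᵀ * Pᵀ * Dᵀ := by
      calc Dᵀ = (D * P * D)ᵀ := by rw [hP1]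
      _ = Dᵀ * (D * P)ᵀ := by rw [Matrix.transpose_mul]
      _ = Dᵀ * (Pᵀ * Dᵀ) := by rw [Matrix.transpose_mul]
      _ = Dᵀ * Pᵀ * Dᵀ := by rw [Matrix.mul_assoc]
    calc Q = Q * D * Q := hQ2.symm
    _ = (Q * D) * Q := rfl
    _ = (Q * D)ᵀ * Q := by rw [hQ4]
    _ = Dᵀ * Qᵀ * Q := by rw [Matrix.transpose_mul]
    _ = (Dᵀ * Pᵀ * Dᵀ) * Qᵀ * Q := by rw [← hDt]
    _ = Dᵀ * Pᵀ * (Dᵀ * Qᵀ * Q) := by simp only [Matrix.mul_assoc]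
    _ = Dᵀ * Pᵀ * ((Q*D)ᵀ * Q) := by rw [Matrix.transpose_mul]
    _ = Dᵀ * Pᵀ * (Q * D * Q) := by rw [hQ4]
    _ = Dᵀ * Pᵀ * Q := by rw [hQ2]
    _ = (P * D)ᵀ * Q := by rw [Matrix.transpose_mul]
    _ = P * D * Q := by rw [hP4]
  rw [e1, ← e2]

lemma mp_symm {D X : Matrix β β ℝ} (hD : Dᵀ = D) (h : IsMP D X) : Xᵀ = X := by
  obtain ⟨h1, h2, h3, h4⟩ := h
  have h' : IsMP D Xᵀ := by
    refine ⟨?_, ?_, ?_, ?_⟩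
    · calc D * Xᵀ * D = (Dᵀ * X * Dᵀ)ᵀ := by
            simp only [Matrix.transpose_mul, Matrix.transpose_transpose]
            simp only [Matrix.mul_assoc]
      _ = (D * X * D)ᵀ := by rw [hD]
      _ = Dᵀ := by rw [h1]
      _ = D := hD
    · calc Xᵀ * D * Xᵀ = (X * Dᵀ * X)ᵀ := by
            simp only [Matrix.transpose_mul, Matrix.transpose_transpose]
            simp only [Matrix.mul_assoc]
      _ = (X * D * X)ᵀ := by rw [hD]
      _ = Xᵀ := by rw [h2]
    · calc (D * Xᵀ)ᵀ = X * Dᵀ := by rw [Matrix.transpose_mul, Matrix.transpose_transpose]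
      _ = X * D := by rw [hD]
      _ = (X * D)ᵀ := h4.symm
      _ = Dᵀ * Xᵀ := by rw [Matrix.transpose_mul]
      _ = D * Xᵀ := by rw [hD]
    · calc (Xᵀ * D)ᵀ = Dᵀ * X := by rw [Matrix.transpose_mul, Matrix.transpose_transpose]
      _ = D * X := by rw [hD]
      _ = (D * X)ᵀ := h3.symm
      _ = Xᵀ * Dᵀ := by rw [Matrix.transpose_mul]
      _ = Xᵀ * D := by rw [hD]
  exact mp_unique h' ⟨h1, h2, h3, h4⟩

lemma gram_sym (N : Matrix α β ℝ) : (Nᵀ * N)ᵀ = Nᵀ * N := by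
  rw [Matrix.transpose_mul, Matrix.transpose_transpose]

/-- `N * X * (NᵀN) = N` when `X` is a pseudoinverse of the Gram matrix. -/
lemma fix {N : Matrix α β ℝ} {X : Matrix β β ℝ} (hX : IsMP (Nᵀ * N) X) :
    N * (X * (Nᵀ * N)) = N := by
  have hD : (Nᵀ * N)ᵀ = Nᵀ * N := gram_sym N
  have hXs : Xᵀ = X := mp_symm hD hX
  have h1 : (Nᵀ * N) * X * (Nᵀ * N) = Nᵀ * N := hX.1
  have h1' : (Nᵀ * N) * (X * (Nᵀ * N)) = Nᵀ * N := by rw [← Matrix.mul_assoc]; exact h1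
  apply sub_eq_zero.mp
  apply gram_zero
  have expand : (N * (X * (Nᵀ * N)) - N)ᵀ * (N * (X * (Nᵀ * N)) - N)
      = (X * (Nᵀ * N))ᵀ * ((Nᵀ * N) * (X * (Nᵀ * N)))
        - (X * (Nᵀ * N))ᵀ * (Nᵀ * N) - (Nᵀ * N) * (X * (Nᵀ * N)) + Nᵀ * N := by
    rw [Matrix.transpose_sub, Matrix.sub_mul, Matrix.mul_sub, Matrix.mul_sub]
    rw [Matrix.transpose_mul (N) (X * (Nᵀ * N))]
    simp only [Matrix.mul_assoc]
    abel
  rw [expand, h1']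
  have e2 : (X * (Nᵀ * N))ᵀ * (Nᵀ * N) = Nᵀ * N := by
    rw [Matrix.transpose_mul, hD, hXs, h1]
  rw [e2]
  abel

lemma psym {N : Matrix α β ℝ} {X : Matrix β β ℝ} (hX : IsMP (Nᵀ * N) X) :
    (N * X * Nᵀ)ᵀ = N * X * Nᵀ := by
  rw [Matrix.transpose_mul, Matrix.transpose_mul, Matrix.transpose_transpose,
    mp_symm (gram_sym N) hX, ← Matrix.mul_assoc]

lemma pfix {N : Matrix α β ℝ} {X : Matrix β β ℝ} (hX : IsMP (Nᵀ * N) X) :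
    (N * X * Nᵀ) * N = N := by
  calc (N * X * Nᵀ) * N = N * (X * (Nᵀ * N)) := by simp only [Matrix.mul_assoc]
  _ = N := fix hX

lemma pidem {N : Matrix α β ℝ} {X : Matrix β β ℝ} (hX : IsMP (Nᵀ * N) X) :
    (N * X * Nᵀ) * (N * X * Nᵀ) = N * X * Nᵀ := by
  calc (N * X * Nᵀ) * (N * X * Nᵀ) = ((N * X * Nᵀ) * N) * (X * Nᵀ) := by
        simp only [Matrix.mul_assoc]
  _ = N * (X * Nᵀ) := by rw [pfix hX]
  _ = N * X * Nᵀ := by rw [Matrix.mul_assoc]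

def IsProjOn (N₁ : Matrix α β₁ ℝ) (N₂ : Matrix α β₂ ℝ) (Q : Matrix α α ℝ) : Prop :=
  Qᵀ = Q ∧ Q * Q = Q ∧ Q * N₁ = N₁ ∧ Q * N₂ = N₂ ∧
    ∃ (X₁ : Matrix β₁ α ℝ) (X₂ : Matrix β₂ α ℝ), Q = N₁ * X₁ + N₂ * X₂

lemma isProjOn_unique {N₁ : Matrix α β₁ ℝ} {N₂ : Matrix α β₂ ℝ} {Q Q' : Matrix α α ℝ}
    (h : IsProjOn N₁ N₂ Q) (h' : IsProjOn N₁ N₂ Q') : Q = Q' := by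
  obtain ⟨hs, hi, h1, h2, X₁, X₂, hf⟩ := h
  obtain ⟨hs', hi', h1', h2', X₁', X₂', hf'⟩ := h'
  have e1 : Q * Q' = Q' := by
    rw [hf', Matrix.mul_add, ← Matrix.mul_assoc, ← Matrix.mul_assoc, h1, h2]
  have e2 : Q' * Q = Q := by
    rw [hf, Matrix.mul_add, ← Matrix.mul_assoc, ← Matrix.mul_assoc, h1', h2']
  calc Q = Q' * Q := e2.symm
  _ = Q'ᵀ * Qᵀ := by rw [hs', hs]
  _ = (Q * Q')ᵀ := (Matrix.transpose_mul Q Q').symm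
  _ = Q'ᵀ := by rw [e1]
  _ = Q' := hs'

lemma isProjOn_swap {N₁ : Matrix α β₁ ℝ} {N₂ : Matrix α β₂ ℝ} {Q : Matrix α α ℝ}
    (h : IsProjOn N₁ N₂ Q) : IsProjOn N₂ N₁ Q := by
  obtain ⟨hs, hi, h1, h2, X₁, X₂, hf⟩ := h
  exact ⟨hs, hi, h2, h1, X₂, X₁, by rw [hf, add_comm]⟩

lemma cand (N₁ : Matrix α β₁ ℝ) (N₂ : Matrix α β₂ ℝ) (X₂ : Matrix β₂ β₂ ℝ)
    (hX₂ : IsMP (N₂ᵀ * N₂) X₂) (X₁ : Matrix β₁ β₁ ℝ)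
    (hX₁ : IsMP ((N₁ - N₂ * X₂ * N₂ᵀ * N₁)ᵀ * (N₁ - N₂ * X₂ * N₂ᵀ * N₁)) X₁) :
    IsProjOn N₁ N₂
      (N₂ * X₂ * N₂ᵀ + (N₁ - N₂ * X₂ * N₂ᵀ * N₁) * X₁ * (N₁ - N₂ * X₂ * N₂ᵀ * N₁)ᵀ) := by
  set Pk : Matrix α α ℝ := N₂ * X₂ * N₂ᵀ with hPkdef
  set M : Matrix α β₁ ℝ := N₁ - Pk * N₁ with hMdef
  set PM : Matrix α α ℝ := M * X₁ * Mᵀ with hPMdef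
  have hPks : Pkᵀ = Pk := psym hX₂
  have hPk2 : Pk * Pk = Pk := pidem hX₂
  have hPkN₂ : Pk * N₂ = N₂ := pfix hX₂
  have hPMs : PMᵀ = PM := psym hX₁
  have hPMM : PM * M = M := pfix hX₁
  have hPM2 : PM * PM = PM := pidem hX₁
  have hMt : Mᵀ = N₁ᵀ - N₁ᵀ * Pk := by
    rw [hMdef, Matrix.transpose_sub, Matrix.transpose_mul, hPks]
  have hMPk : Mᵀ * Pk = 0 := by
    rw [hMt, Matrix.sub_mul, Matrix.mul_assoc, hPk2, sub_self]
  have hPkM : Pk * M = 0 := by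
    have := congrArg Matrix.transpose hMPk
    rwa [Matrix.transpose_mul, Matrix.transpose_transpose, hPks, Matrix.transpose_zero] at this
  have hMN₂ : Mᵀ * N₂ = 0 := by
    rw [hMt, Matrix.sub_mul, Matrix.mul_assoc, hPkN₂, sub_self]
  have hPMPk : PM * Pk = 0 := by
    rw [hPMdef, Matrix.mul_assoc, hMPk, Matrix.mul_zero]
  have hPkPM : Pk * PM = 0 := by
    have := congrArg Matrix.transpose hPMPk
    rwa [Matrix.transpose_mul, hPks, hPMs, Matrix.transpose_zero] at this
  have hPMN₂ : PM * N₂ = 0 := by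
    rw [hPMdef, Matrix.mul_assoc, hMN₂, Matrix.mul_zero]
  have hPMN₁ : PM * N₁ = M := by
    have hN₁ : N₁ = M + Pk * N₁ := by rw [hMdef]; abel
    calc PM * N₁ = PM * (M + Pk * N₁) := by rw [← hN₁]
    _ = PM * M + (PM * Pk) * N₁ := by rw [Matrix.mul_add, ← Matrix.mul_assoc PM Pk N₁]
    _ = M := by rw [hPMM, hPMPk, Matrix.zero_mul, add_zero]
  refine ⟨?_, ?_, ?_, ?_, ?_⟩
  · rw [Matrix.transpose_add, hPks, hPMs]
  · rw [Matrix.add_mul, Matrix.mul_add, Matrix.mul_add, hPk2, hPkPM, hPMPk, hPM2]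
    abel
  · rw [Matrix.add_mul, hPMN₁, hMdef]; abel
  · rw [Matrix.add_mul, hPkN₂, hPMN₂, add_zero]
  · refine ⟨X₁ * Mᵀ, X₂ * N₂ᵀ - X₂ * N₂ᵀ * N₁ * X₁ * Mᵀ, ?_⟩
    have hM1 : M * (X₁ * Mᵀ) = N₁ * (X₁ * Mᵀ) - N₂ * (X₂ * N₂ᵀ * N₁ * X₁ * Mᵀ) := by
      rw [hMdef, Matrix.sub_mul, hPkdef]
      simp only [Matrix.mul_assoc]
    calc Pk + PM = Pk + M * (X₁ * Mᵀ) := by rw [hPMdef, Matrix.mul_assoc]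
    _ = N₂ * (X₂ * N₂ᵀ) + (N₁ * (X₁ * Mᵀ) - N₂ * (X₂ * N₂ᵀ * N₁ * X₁ * Mᵀ)) := by
        rw [hM1, hPkdef, Matrix.mul_assoc]
    _ = N₁ * (X₁ * Mᵀ) + N₂ * (X₂ * N₂ᵀ - X₂ * N₂ᵀ * N₁ * X₁ * Mᵀ) := by
        rw [Matrix.mul_sub]; abel

lemma gram_psd (Z : Matrix α β ℝ) [DecidableEq α] : (Zᵀ * Z).PosSemidef := by
  have h := Matrix.posSemidef_conjTranspose_mul_self Z
  rwa [Matrix.conjTranspose_eq_transpose_of_trivial] at h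

lemma contract {Z : Matrix α β ℝ} {Q : Matrix α α ℝ} (hs : Qᵀ = Q) (hi : Q * Q = Q) :
    (Z - Q * Z)ᵀ * (Z - Q * Z) = Zᵀ * Z - Zᵀ * (Q * Z) := by
  rw [Matrix.transpose_sub, Matrix.sub_mul, Matrix.mul_sub, Matrix.mul_sub,
    Matrix.transpose_mul, hs]
  have h1 : (Zᵀ * Q) * Z = Zᵀ * (Q * Z) := Matrix.mul_assoc _ _ _
  have h2 : (Zᵀ * Q) * (Q * Z) = Zᵀ * (Q * Z) := by
    rw [Matrix.mul_assoc, ← Matrix.mul_assoc Q Q Z, hi]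
  rw [h1, h2]
  abel

lemma contract2 {Z : Matrix α β ℝ} {W : Matrix α β₂ ℝ} {Q : Matrix α α ℝ}
    (hs : Qᵀ = Q) (hi : Q * Q = Q) :
    (Z - Q * Z)ᵀ * (W - Q * W) = Zᵀ * W - Zᵀ * (Q * W) := by
  rw [Matrix.transpose_sub, Matrix.sub_mul, Matrix.mul_sub, Matrix.mul_sub,
    Matrix.transpose_mul, hs]
  have h1 : (Zᵀ * Q) * W = Zᵀ * (Q * W) := Matrix.mul_assoc _ _ _
  have h2 : (Zᵀ * Q) * (Q * W) = Zᵀ * (Q * W) := by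
    rw [Matrix.mul_assoc, ← Matrix.mul_assoc Q Q W, hi]
  rw [h1, h2]
  abel

lemma orth {Z : Matrix α β ℝ} {W : Matrix α β₂ ℝ} {Q : Matrix α α ℝ}
    (hs : Qᵀ = Q) (h0 : Q * W = 0) : (Z - Q * Z)ᵀ * W = Zᵀ * W := by
  rw [Matrix.transpose_sub, Matrix.sub_mul, Matrix.transpose_mul, hs,
    Matrix.mul_assoc, h0, Matrix.mul_zero, sub_zero]

open scoped MatrixOrder in
lemma psd_factor {ι : Type*} [Fintype ι] [DecidableEq ι] {M : Matrix ι ι ℝ} (h : M.PosSemidef) :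
    ∃ W : Matrix ι ι ℝ, M = Wᴴ * W := by
  obtain ⟨B, hB⟩ := CStarAlgebra.nonneg_iff_eq_star_mul_self.mp h.nonneg
  exact ⟨B, hB⟩

lemma step {n m k : ℕ}
    (pinvm : Matrix (Fin m) (Fin m) ℝ → Matrix (Fin m) (Fin m) ℝ)
    (pinvk : Matrix (Fin k) (Fin k) ℝ → Matrix (Fin k) (Fin k) ℝ)
    (hpm : ∀ X, IsMP X (pinvm X)) (hpk : ∀ X, IsMP X (pinvk X))
    (A : Matrix (Fin n) (Fin n) ℝ) (B : Matrix (Fin n) (Fin m) ℝ)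
    (Qx : Matrix (Fin n) (Fin n) ℝ) (Qxw : Matrix (Fin n) (Fin m) ℝ)
    (Qw : Matrix (Fin m) (Fin m) ℝ)
    (hQ : (Matrix.fromBlocks Qx Qxw Qxwᵀ Qw).PosSemidef)
    (P Pt : Matrix (Fin n) (Fin n) ℝ) (V : Matrix (Fin n) (Fin k) ℝ)
    (C : Matrix (Fin k) (Fin k) ℝ)
    (hPpsd : P.PosSemidef) (hC : C.PosSemidef) (hV : ∃ Y : Matrix (Fin k) (Fin n) ℝ, Vᵀ = C * Y)
    (hPtdef : Pt = P - V * pinvk C * Vᵀ) (hPtpsd : Pt.PosSemidef) :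
    ∃ (Ct : Matrix (Fin k) (Fin k) ℝ) (Vt : Matrix (Fin n) (Fin k) ℝ),
      Ct.PosSemidef ∧ (∃ Y : Matrix (Fin k) (Fin n) ℝ, Vtᵀ = Ct * Y) ∧
      ((Qx + Aᵀ * Pt * A) - (Qxw + Aᵀ * Pt * B) * pinvm (Qw + Bᵀ * Pt * B) *
          (Qxw + Aᵀ * Pt * B)ᵀ)
        = ((Qx + Aᵀ * P * A) - (Qxw + Aᵀ * P * B) * pinvm (Qw + Bᵀ * P * B) *
          (Qxw + Aᵀ * P * B)ᵀ) - Vt * pinvk Ct * Vtᵀ ∧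
      ((Qx + Aᵀ * Pt * A) - (Qxw + Aᵀ * Pt * B) * pinvm (Qw + Bᵀ * Pt * B) *
          (Qxw + Aᵀ * Pt * B)ᵀ).PosSemidef ∧
      ((Qx + Aᵀ * P * A) - (Qxw + Aᵀ * P * B) * pinvm (Qw + Bᵀ * P * B) *
          (Qxw + Aᵀ * P * B)ᵀ).PosSemidef := by
  obtain ⟨Y, hY⟩ := hV
  have hCs : Cᵀ = C := by
    have h : Cᴴ = C := hC.1
    rwa [Matrix.conjTranspose_eq_transpose_of_trivial] at h
  have hVform : V = Yᵀ * C := by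
    have h := congrArg Matrix.transpose hY
    rwa [Matrix.transpose_transpose, Matrix.transpose_mul, hCs] at h
  have hVCV : V * pinvk C * Vᵀ = Yᵀ * C * Y := by
    rw [hY, hVform]
    calc Yᵀ * C * pinvk C * (C * Y) = Yᵀ * (C * pinvk C * C) * Y := by
          simp only [Matrix.mul_assoc]
    _ = Yᵀ * C * Y := by rw [(hpk C).1]
  -- the bordered matrix is PSD
  have hNbig : (fromBlocks P V Vᵀ C).PosSemidef := by
    have h1 : (fromBlocks Pt (0 : Matrix (Fin n) (Fin k) ℝ)
        (0 : Matrix (Fin k) (Fin n) ℝ) (0 : Matrix (Fin k) (Fin k) ℝ)).PosSemidef := by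
      have h := hPtpsd.conjTranspose_mul_mul_same
        (fromCols (1 : Matrix (Fin n) (Fin n) ℝ) (0 : Matrix (Fin n) (Fin k) ℝ))
      have e : (fromCols (1 : Matrix (Fin n) (Fin n) ℝ) (0 : Matrix (Fin n) (Fin k) ℝ))ᴴ *
          Pt * fromCols (1 : Matrix (Fin n) (Fin n) ℝ) (0 : Matrix (Fin n) (Fin k) ℝ) =
          fromBlocks Pt (0 : Matrix (Fin n) (Fin k) ℝ) (0 : Matrix (Fin k) (Fin n) ℝ)
            (0 : Matrix (Fin k) (Fin k) ℝ) := by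
        rw [Matrix.conjTranspose_eq_transpose_of_trivial, Matrix.transpose_fromCols,
          Matrix.transpose_one, Matrix.transpose_zero, Matrix.fromRows_mul,
          Matrix.fromRows_mul_fromCols]
        simp
      rwa [e] at h
    have h2 := hC.conjTranspose_mul_mul_same (fromCols Y (1 : Matrix (Fin k) (Fin k) ℝ))
    have e2 : (fromCols Y (1 : Matrix (Fin k) (Fin k) ℝ))ᴴ * C *
        fromCols Y (1 : Matrix (Fin k) (Fin k) ℝ) =
        fromBlocks (Yᵀ * C * Y) (Yᵀ * C) (C * Y) C := by
      rw [Matrix.conjTranspose_eq_transpose_of_trivial, Matrix.transpose_fromCols,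
        Matrix.transpose_one, Matrix.fromRows_mul, Matrix.fromRows_mul_fromCols]
      simp
    rw [e2] at h2
    have hsum := h1.add h2
    have e3 : fromBlocks Pt (0 : Matrix (Fin n) (Fin k) ℝ) (0 : Matrix (Fin k) (Fin n) ℝ)
        (0 : Matrix (Fin k) (Fin k) ℝ) + fromBlocks (Yᵀ * C * Y) (Yᵀ * C) (C * Y) C =
        fromBlocks P V Vᵀ C := by
      rw [Matrix.fromBlocks_add]
      refine Matrix.fromBlocks_inj.mpr ⟨?_, ?_, ?_, ?_⟩
      · rw [hPtdef, hVCV]; abel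
      · rw [zero_add, ← hVform]
      · rw [zero_add, hY]
      · rw [zero_add]
    rwa [e3] at hsum
  -- factor the stage cost
  obtain ⟨W, hW⟩ := psd_factor hQ
  rw [Matrix.conjTranspose_eq_transpose_of_trivial] at hW
  set R₁ : Matrix (Fin n ⊕ Fin m) (Fin n) ℝ := W.toCols₁ with hR₁
  set R₂ : Matrix (Fin n ⊕ Fin m) (Fin m) ℝ := W.toCols₂ with hR₂
  have hWc : W = fromCols R₁ R₂ := (Matrix.fromCols_toCols W).symm
  have hQblocks : fromBlocks Qx Qxw Qxwᵀ Qw =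
      fromBlocks (R₁ᵀ * R₁) (R₁ᵀ * R₂) (R₂ᵀ * R₁) (R₂ᵀ * R₂) := by
    rw [hW, hWc, Matrix.transpose_fromCols, Matrix.fromRows_mul_fromCols]
  obtain ⟨hQx, hQxw, -, hQw⟩ := Matrix.fromBlocks_inj.mp hQblocks
  -- factor the bordered matrix
  obtain ⟨S, hS⟩ := psd_factor hNbig
  rw [Matrix.conjTranspose_eq_transpose_of_trivial] at hS
  set S₁ : Matrix (Fin n ⊕ Fin k) (Fin n) ℝ := S.toCols₁ with hS₁
  set S₂ : Matrix (Fin n ⊕ Fin k) (Fin k) ℝ := S.toCols₂ with hS₂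
  have hSc : S = fromCols S₁ S₂ := (Matrix.fromCols_toCols S).symm
  have hSblocks : fromBlocks P V Vᵀ C =
      fromBlocks (S₁ᵀ * S₁) (S₁ᵀ * S₂) (S₂ᵀ * S₁) (S₂ᵀ * S₂) := by
    rw [hS, hSc, Matrix.transpose_fromCols, Matrix.fromRows_mul_fromCols]
  obtain ⟨hPg, hVg, -, hCg⟩ := Matrix.fromBlocks_inj.mp hSblocks
  -- the three stacked matrices
  set Un : Matrix ((Fin n ⊕ Fin m) ⊕ (Fin n ⊕ Fin k)) (Fin n) ℝ := fromRows R₁ (S₁ * A) with hUn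
  set Um : Matrix ((Fin n ⊕ Fin m) ⊕ (Fin n ⊕ Fin k)) (Fin m) ℝ := fromRows R₂ (S₁ * B) with hUm
  set Uk : Matrix ((Fin n ⊕ Fin m) ⊕ (Fin n ⊕ Fin k)) (Fin k) ℝ := fromRows 0 S₂ with hUk
  -- Gram identities
  have gnn : Unᵀ * Un = Qx + Aᵀ * P * A := by
    rw [hQx, hPg, hUn, Matrix.transpose_fromRows, Matrix.fromCols_mul_fromRows,
      Matrix.transpose_mul]
    simp only [Matrix.mul_assoc]
  have gnm : Unᵀ * Um = Qxw + Aᵀ * P * B := by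
    rw [hQxw, hPg, hUn, hUm, Matrix.transpose_fromRows, Matrix.fromCols_mul_fromRows,
      Matrix.transpose_mul]
    simp only [Matrix.mul_assoc]
  have gmm : Umᵀ * Um = Qw + Bᵀ * P * B := by
    rw [hQw, hPg, hUm, Matrix.transpose_fromRows, Matrix.fromCols_mul_fromRows,
      Matrix.transpose_mul]
    simp only [Matrix.mul_assoc]
  have gnk : Unᵀ * Uk = Aᵀ * V := by
    rw [hVg, hUn, hUk, Matrix.transpose_fromRows, Matrix.fromCols_mul_fromRows,
      Matrix.transpose_mul, Matrix.mul_zero]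
    simp only [Matrix.mul_assoc, zero_add]
  have gmk : Umᵀ * Uk = Bᵀ * V := by
    rw [hVg, hUm, hUk, Matrix.transpose_fromRows, Matrix.fromCols_mul_fromRows,
      Matrix.transpose_mul, Matrix.mul_zero]
    simp only [Matrix.mul_assoc, zero_add]
  have gkk : Ukᵀ * Uk = C := by
    rw [hCg, hUk, Matrix.transpose_fromRows, Matrix.fromCols_mul_fromRows,
      Matrix.transpose_zero, Matrix.mul_zero, zero_add]
  have gkn : Ukᵀ * Un = Vᵀ * A := by
    have h := congrArg Matrix.transpose gnk
    simpa [Matrix.transpose_mul] using h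
  have gkm : Ukᵀ * Um = Vᵀ * B := by
    have h := congrArg Matrix.transpose gmk
    simpa [Matrix.transpose_mul] using h
  -- pseudoinverses of the Gram matrices
  set Xm := pinvm (Qw + Bᵀ * P * B) with hXmdef
  set Xk := pinvk C with hXkdef
  set Xm' := pinvm (Qw + Bᵀ * Pt * B) with hXm'def
  have hXm : IsMP (Umᵀ * Um) Xm := by rw [gmm]; exact hpm _
  have hXk : IsMP (Ukᵀ * Uk) Xk := by rw [gkk]; exact hpk _
  have sK : (Uk * Xk * Ukᵀ)ᵀ = Uk * Xk * Ukᵀ := psym hXk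
  have iK : (Uk * Xk * Ukᵀ) * (Uk * Xk * Ukᵀ) = Uk * Xk * Ukᵀ := pidem hXk
  have sM : (Um * Xm * Umᵀ)ᵀ = Um * Xm * Umᵀ := psym hXm
  have iM : (Um * Xm * Umᵀ) * (Um * Xm * Umᵀ) = Um * Xm * Umᵀ := pidem hXm
  -- Gram identities for Pt
  have keyNN : Unᵀ * ((Uk * Xk * Ukᵀ) * Un) = Aᵀ * (V * pinvk C * Vᵀ) * A := by
    calc Unᵀ * ((Uk * Xk * Ukᵀ) * Un) = (Unᵀ * Uk) * (Xk * (Ukᵀ * Un)) := by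
          simp only [Matrix.mul_assoc]
    _ = (Aᵀ * V) * (Xk * (Vᵀ * A)) := by rw [gnk, gkn]
    _ = Aᵀ * (V * pinvk C * Vᵀ) * A := by simp only [Matrix.mul_assoc, hXkdef]
  have keyNM : Unᵀ * ((Uk * Xk * Ukᵀ) * Um) = Aᵀ * (V * pinvk C * Vᵀ) * B := by
    calc Unᵀ * ((Uk * Xk * Ukᵀ) * Um) = (Unᵀ * Uk) * (Xk * (Ukᵀ * Um)) := by
          simp only [Matrix.mul_assoc]
    _ = (Aᵀ * V) * (Xk * (Vᵀ * B)) := by rw [gnk, gkm]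
    _ = Aᵀ * (V * pinvk C * Vᵀ) * B := by simp only [Matrix.mul_assoc, hXkdef]
  have keyMM : Umᵀ * ((Uk * Xk * Ukᵀ) * Um) = Bᵀ * (V * pinvk C * Vᵀ) * B := by
    calc Umᵀ * ((Uk * Xk * Ukᵀ) * Um) = (Umᵀ * Uk) * (Xk * (Ukᵀ * Um)) := by
          simp only [Matrix.mul_assoc]
    _ = (Bᵀ * V) * (Xk * (Vᵀ * B)) := by rw [gmk, gkm]
    _ = Bᵀ * (V * pinvk C * Vᵀ) * B := by simp only [Matrix.mul_assoc, hXkdef]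
  have gnn' : (Un - (Uk * Xk * Ukᵀ) * Un)ᵀ * (Un - (Uk * Xk * Ukᵀ) * Un)
      = Qx + Aᵀ * Pt * A := by
    rw [contract sK iK, keyNN, gnn, hPtdef, Matrix.mul_sub, Matrix.sub_mul]
    abel
  have gnm' : (Un - (Uk * Xk * Ukᵀ) * Un)ᵀ * (Um - (Uk * Xk * Ukᵀ) * Um)
      = Qxw + Aᵀ * Pt * B := by
    rw [contract2 sK iK, keyNM, gnm, hPtdef, Matrix.mul_sub, Matrix.sub_mul]
    abel
  have gmm' : (Um - (Uk * Xk * Ukᵀ) * Um)ᵀ * (Um - (Uk * Xk * Ukᵀ) * Um)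
      = Qw + Bᵀ * Pt * B := by
    rw [contract sK iK, keyMM, gmm, hPtdef, Matrix.mul_sub, Matrix.sub_mul]
    abel
  have hXm' : IsMP ((Um - (Uk * Xk * Ukᵀ) * Um)ᵀ * (Um - (Uk * Xk * Ukᵀ) * Um)) Xm' := by
    rw [gmm']; exact hpm _
  -- the modified downdate data
  set Ct : Matrix (Fin k) (Fin k) ℝ :=
    (Uk - (Um * Xm * Umᵀ) * Uk)ᵀ * (Uk - (Um * Xm * Umᵀ) * Uk) with hCtdef
  set Xk' := pinvk Ct with hXk'def
  have hXk' : IsMP ((Uk - (Um * Xm * Umᵀ) * Uk)ᵀ * (Uk - (Um * Xm * Umᵀ) * Uk)) Xk' := hpk Ct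
  set Vt : Matrix (Fin n) (Fin k) ℝ := Unᵀ * (Uk - (Um * Xm * Umᵀ) * Uk) with hVtdef
  -- the two projections agree
  have c1 : IsProjOn Um Uk
      (Uk * Xk * Ukᵀ + (Um - Uk * Xk * Ukᵀ * Um) * Xm' * (Um - Uk * Xk * Ukᵀ * Um)ᵀ) :=
    cand Um Uk Xk hXk Xm' hXm'
  have c2 : IsProjOn Um Uk
      (Um * Xm * Umᵀ + (Uk - Um * Xm * Umᵀ * Uk) * Xk' * (Uk - Um * Xm * Umᵀ * Uk)ᵀ) :=
    isProjOn_swap (cand Uk Um Xm hXm Xk' hXk')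
  have hQQeq := isProjOn_unique c1 c2
  -- expressing the two Riccati values
  have EP : (Qx + Aᵀ * P * A) - (Qxw + Aᵀ * P * B) * Xm * (Qxw + Aᵀ * P * B)ᵀ
      = Unᵀ * Un - Unᵀ * ((Um * Xm * Umᵀ) * Un) := by
    rw [← gnn, ← gnm, Matrix.transpose_mul, Matrix.transpose_transpose]
    simp only [Matrix.mul_assoc]
  have hPkUm0 : (Uk * Xk * Ukᵀ) * (Um - (Uk * Xk * Ukᵀ) * Um) = 0 := by
    rw [Matrix.mul_sub, ← Matrix.mul_assoc (Uk * Xk * Ukᵀ) (Uk * Xk * Ukᵀ) Um, iK, sub_self]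
  have t1 : (Un - (Uk * Xk * Ukᵀ) * Un)ᵀ * (Um - (Uk * Xk * Ukᵀ) * Um)
      = Unᵀ * (Um - (Uk * Xk * Ukᵀ) * Um) := orth sK hPkUm0
  have EPt : (Qx + Aᵀ * Pt * A) - (Qxw + Aᵀ * Pt * B) * Xm' * (Qxw + Aᵀ * Pt * B)ᵀ
      = Unᵀ * Un - Unᵀ *
        ((Uk * Xk * Ukᵀ + (Um - Uk * Xk * Ukᵀ * Um) * Xm' * (Um - Uk * Xk * Ukᵀ * Um)ᵀ) * Un) := by
    rw [← gnn', ← gnm', t1, contract sK iK, Matrix.transpose_mul, Matrix.transpose_transpose,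
      Matrix.add_mul, Matrix.mul_add]
    simp only [Matrix.mul_assoc]
    abel
  have EV : Vt * Xk' * Vtᵀ
      = Unᵀ * ((Uk - Um * Xm * Umᵀ * Uk) * Xk' * (Uk - Um * Xm * Umᵀ * Uk)ᵀ * Un) := by
    rw [hVtdef, Matrix.transpose_mul, Matrix.transpose_transpose]
    simp only [Matrix.mul_assoc]
  -- assemble
  refine ⟨Ct, Vt, gram_psd _, ⟨Xk' * ((Uk - (Um * Xm * Umᵀ) * Uk)ᵀ * Un), ?_⟩, ?_, ?_, ?_⟩
  · -- range condition
    have hfix := fix hXk'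
    have hfix' : Ct * Xk' * (Uk - (Um * Xm * Umᵀ) * Uk)ᵀ = (Uk - (Um * Xm * Umᵀ) * Uk)ᵀ := by
      have h := congrArg Matrix.transpose hfix
      rw [Matrix.transpose_mul] at h
      rw [Matrix.transpose_mul (Xk') _] at h
      rw [gram_sym, mp_symm (gram_sym _) hXk'] at h
      rw [← hCtdef] at h
      exact h
    calc Vtᵀ = (Uk - (Um * Xm * Umᵀ) * Uk)ᵀ * Un := by
          rw [hVtdef, Matrix.transpose_mul, Matrix.transpose_transpose]
    _ = (Ct * Xk' * (Uk - (Um * Xm * Umᵀ) * Uk)ᵀ) * Un := by rw [hfix']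
    _ = Ct * (Xk' * ((Uk - (Um * Xm * Umᵀ) * Uk)ᵀ * Un)) := by simp only [Matrix.mul_assoc]
  · -- the downdate identity
    calc (Qx + Aᵀ * Pt * A) - (Qxw + Aᵀ * Pt * B) * Xm' * (Qxw + Aᵀ * Pt * B)ᵀ
        = Unᵀ * Un - Unᵀ *
          ((Uk * Xk * Ukᵀ + (Um - Uk * Xk * Ukᵀ * Um) * Xm' * (Um - Uk * Xk * Ukᵀ * Um)ᵀ) * Un) :=
          EPt
    _ = Unᵀ * Un - Unᵀ *
          ((Um * Xm * Umᵀ + (Uk - Um * Xm * Umᵀ * Uk) * Xk' * (Uk - Um * Xm * Umᵀ * Uk)ᵀ) * Un) := by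
          rw [hQQeq]
    _ = Unᵀ * Un - (Unᵀ * ((Um * Xm * Umᵀ) * Un)
          + Unᵀ * ((Uk - Um * Xm * Umᵀ * Uk) * Xk' * (Uk - Um * Xm * Umᵀ * Uk)ᵀ * Un)) := by
          rw [Matrix.add_mul, Matrix.mul_add]
    _ = (Unᵀ * Un - Unᵀ * ((Um * Xm * Umᵀ) * Un))
          - Unᵀ * ((Uk - Um * Xm * Umᵀ * Uk) * Xk' * (Uk - Um * Xm * Umᵀ * Uk)ᵀ * Un) := by
          abel
    _ = ((Qx + Aᵀ * P * A) - (Qxw + Aᵀ * P * B) * Xm * (Qxw + Aᵀ * P * B)ᵀ)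
          - Vt * Xk' * Vtᵀ := by rw [← EP, ← EV]
  · -- PSD of the new modified value
    obtain ⟨qs, qi, -, -, -⟩ := c1
    rw [EPt, ← contract qs qi]
    exact gram_psd _
  · -- PSD of the new nominal value
    rw [EP, ← contract sM iM]
    exact gram_psd _

end RiccatiAux

theorem riccati_downdate_induction {n m k : ℕ}
    (pinvm : Matrix (Fin m) (Fin m) ℝ → Matrix (Fin m) (Fin m) ℝ)
    (pinvk : Matrix (Fin k) (Fin k) ℝ → Matrix (Fin k) (Fin k) ℝ)
    (hpm : ∀ X, IsMP X (pinvm X)) (hpk : ∀ X, IsMP X (pinvk X))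
    (A : ℕ → Matrix (Fin n) (Fin n) ℝ) (B : ℕ → Matrix (Fin n) (Fin m) ℝ)
    (Qx : ℕ → Matrix (Fin n) (Fin n) ℝ) (Qxw : ℕ → Matrix (Fin n) (Fin m) ℝ)
    (Qw : ℕ → Matrix (Fin m) (Fin m) ℝ)
    (hQ : ∀ t, (Matrix.fromBlocks (Qx t) (Qxw t) (Qxw t)ᵀ (Qw t)).PosSemidef)
    (tm : ℕ) (P Pt : ℕ → Matrix (Fin n) (Fin n) ℝ)
    (V : Matrix (Fin n) (Fin k) ℝ) (C : Matrix (Fin k) (Fin k) ℝ)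
    (hC : C.PosSemidef)
    (hV : ∃ Y : Matrix (Fin k) (Fin n) ℝ, Vᵀ = C * Y)
    (hPtm : (P tm).PosSemidef)
    (hmod : Pt tm = P tm - V * pinvk C * Vᵀ)
    (hmodpsd : (Pt tm).PosSemidef)
    (hP : ∀ t < tm, P t =
      (Qx t + (A t)ᵀ * P (t+1) * A t) -
        (Qxw t + (A t)ᵀ * P (t+1) * B t) *
          pinvm (Qw t + (B t)ᵀ * P (t+1) * B t) *
            (Qxw t + (A t)ᵀ * P (t+1) * B t)ᵀ)
    (hPt : ∀ t < tm, Pt t =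
      (Qx t + (A t)ᵀ * Pt (t+1) * A t) -
        (Qxw t + (A t)ᵀ * Pt (t+1) * B t) *
          pinvm (Qw t + (B t)ᵀ * Pt (t+1) * B t) *
            (Qxw t + (A t)ᵀ * Pt (t+1) * B t)ᵀ) :
    ∀ t ≤ tm, ∃ (Ct : Matrix (Fin k) (Fin k) ℝ) (Vt : Matrix (Fin n) (Fin k) ℝ),
      Ct.PosSemidef ∧ (∃ Y : Matrix (Fin k) (Fin n) ℝ, Vtᵀ = Ct * Y) ∧
      Pt t = P t - Vt * pinvk Ct * Vtᵀ ∧ (Pt t).PosSemidef := by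
  have main : ∀ d t, t + d = tm → (P t).PosSemidef ∧
      ∃ (Ct : Matrix (Fin k) (Fin k) ℝ) (Vt : Matrix (Fin n) (Fin k) ℝ),
        Ct.PosSemidef ∧ (∃ Y : Matrix (Fin k) (Fin n) ℝ, Vtᵀ = Ct * Y) ∧
        Pt t = P t - Vt * pinvk Ct * Vtᵀ ∧ (Pt t).PosSemidef := by
    intro d
    induction d with
    | zero =>
      intro t ht
      have h : t = tm := by omega
      subst h
      exact ⟨hPtm, C, V, hC, hV, hmod, hmodpsd⟩
    | succ d ih =>
      intro t ht
      have ht1 : (t + 1) + d = tm := by omega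
      have hlt : t < tm := by omega
      obtain ⟨hPnext, C', V', hC', hV', hmod', hmodpsd'⟩ := ih (t + 1) ht1
      obtain ⟨Ct, Vt, h1, h2, h3, h4, h5⟩ :=
        RiccatiAux.step pinvm pinvk hpm hpk (A t) (B t) (Qx t) (Qxw t) (Qw t) (hQ t)
          (P (t + 1)) (Pt (t + 1)) V' C' hPnext hC' hV' hmod' hmodpsd'
      refine ⟨?_, Ct, Vt, h1, h2, ?_, ?_⟩
      · rw [hP t hlt]; exact h5
      · rw [hPt t hlt, hP t hlt]; exact h3
      · rw [hPt t hlt]; exact h4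
  intro t ht
  obtain ⟨-, h⟩ := main (tm - t) t (by omega)
  exact h
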